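/- The group G has a cubic isoperimetric function: there exists a constant C > 0 such that for every word w in the free group F on {θ1, θ2, a, k} whose image in G is trivial, w is equal in F to a product of at most C·|w|³ + C elements, each of the form x⁻¹·r^{±1}·x where x ∈ F and r is one of the four defining relators. -/

import Mathlib

/-- The four generators θ₁, θ₂, a, k of the free group `F` on four letters. -/
def theta1 : FreeGroup (Fin 4) := FreeGroup.of 0
def theta2 : FreeGroup (Fin 4) := FreeGroup.of 1
def aF : FreeGroup (Fin 4) := FreeGroup.of 2
def kF : FreeGroup (Fin 4) := FreeGroup.of 3

/-- The four defining relators θᵢ⁻¹aθᵢa⁻¹ and θᵢ⁻¹kθᵢa⁻¹k⁻¹, i = 1,2. -/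
def rels : Set (FreeGroup (Fin 4)) :=
  {theta1⁻¹ * aF * theta1 * aF⁻¹, theta2⁻¹ * aF * theta2 * aF⁻¹,
   theta1⁻¹ * kF * theta1 * aF⁻¹ * kF⁻¹, theta2⁻¹ * kF * theta2 * aF⁻¹ * kF⁻¹}

/-- The group `G = ⟨θ₁, θ₂, a, k ∣ aᶿⁱ = a, kᶿⁱ = ka⟩`. -/
abbrev G : Type := PresentedGroup rels

/-- The quotient map `F → G`. -/
def π : FreeGroup (Fin 4) →* G := PresentedGroup.mk rels

/-! ### Auxiliary machinery -/

namespace CubicIso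

abbrev F4 := FreeGroup (Fin 4)
abbrev Ltr := Fin 4 × Bool

/-- The free-group element corresponding to a single letter. -/
def ltr (p : Ltr) : F4 := if p.2 then FreeGroup.of p.1 else (FreeGroup.of p.1)⁻¹

/-- Product of a list of letters. -/
def wpr (l : List Ltr) : F4 := (l.map ltr).prod

/-- The number of `k`-letters in a list. -/
def kc (l : List Ltr) : ℕ := l.countP (fun p => p.1 = 3)

/-- Being a conjugate of a relator or of an inverse of a relator. -/
def isConj1 (g : F4) : Prop :=
  ∃ x : F4, ∃ r ∈ rels, g = x⁻¹ * r * x ∨ g = x⁻¹ * r⁻¹ * x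

@[simp] lemma wpr_nil : wpr [] = 1 := rfl

lemma wpr_cons (p : Ltr) (l : List Ltr) : wpr (p :: l) = ltr p * wpr l := by
  simp [wpr]

lemma wpr_append (l₁ l₂ : List Ltr) : wpr (l₁ ++ l₂) = wpr l₁ * wpr l₂ := by
  simp [wpr]

@[simp] lemma kc_nil : kc [] = 0 := rfl

lemma kc_cons (p : Ltr) (l : List Ltr) : kc (p :: l) = kc [p] + kc l := by
  simp [kc, List.countP_cons]; omega

lemma kc_append (l₁ l₂ : List Ltr) : kc (l₁ ++ l₂) = kc l₁ + kc l₂ := by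
  simp [kc, List.countP_append]

lemma wpr_toWord (w : F4) : wpr w.toWord = w := by
  conv_rhs => rw [← FreeGroup.mk_toWord (x := w)]
  generalize w.toWord = l
  induction l with
  | nil => rfl
  | cons p l ih =>
      rw [wpr_cons, ih]
      have h1 : FreeGroup.mk (p :: l) = FreeGroup.mk [p] * FreeGroup.mk l := by
        rw [FreeGroup.mul_mk]; rfl
      rw [h1]
      congr 1
      rcases p with ⟨i, b⟩
      cases b
      · show (FreeGroup.of i)⁻¹ = _
        rw [show FreeGroup.of i = FreeGroup.mk [(i, true)] from rfl, FreeGroup.inv_mk]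
        rfl
      · rfl

/-- Conjugation distributes over list products. -/
lemma conj_prod (x : F4) (L : List F4) :
    (L.map (fun g => x * g * x⁻¹)).prod = x * L.prod * x⁻¹ := by
  induction L with
  | nil => simp
  | cons g L ih => simp only [List.map_cons, List.prod_cons, ih]; group

lemma isConj1_conj {g : F4} (x : F4) (h : isConj1 g) : isConj1 (x * g * x⁻¹) := by
  obtain ⟨y, r, hr, h | h⟩ := h <;> subst h
  · exact ⟨y * x⁻¹, r, hr, Or.inl (by group)⟩
  · exact ⟨y * x⁻¹, r, hr, Or.inr (by group)⟩

/-! ### Generic single-letter exchange identities (valid in any group) -/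

section Generic
variable {H : Type*} [Group H] (θ A K : H)

lemma ex1 : A * θ = (θ * (θ⁻¹ * A * θ * A⁻¹) * θ⁻¹) * (θ * A) := by group
lemma ex2 : A⁻¹ * θ = ((θ⁻¹ * A)⁻¹ * (θ⁻¹ * A * θ * A⁻¹)⁻¹ * (θ⁻¹ * A)) * (θ * A⁻¹) := by group
lemma ex3 : K * θ = (θ * (θ⁻¹ * K * θ * A⁻¹ * K⁻¹) * θ⁻¹) * (θ * (K * A)) := by group
lemma ex4 : K⁻¹ * θ =
    ((θ⁻¹ * K)⁻¹ * (θ⁻¹ * K * θ * A⁻¹ * K⁻¹)⁻¹ * (θ⁻¹ * K)) * (θ * (A⁻¹ * K⁻¹)) := by group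
lemma ex5 : A * θ⁻¹ = (θ⁻¹ * A * θ * A⁻¹)⁻¹ * (θ⁻¹ * A) := by group
lemma ex6 : A⁻¹ * θ⁻¹ = (A⁻¹ * (θ⁻¹ * A * θ * A⁻¹) * A) * (θ⁻¹ * A⁻¹) := by group
lemma ex7 : K * θ⁻¹ =
    ((K * (θ⁻¹ * A * θ * A⁻¹) * K⁻¹) * (θ⁻¹ * K * θ * A⁻¹ * K⁻¹)⁻¹) * (θ⁻¹ * (K * A⁻¹)) := by
  group
lemma ex8 : K⁻¹ * θ⁻¹ =
    ((K⁻¹ * (θ⁻¹ * K * θ * A⁻¹ * K⁻¹) * K) * (θ⁻¹ * A * θ * A⁻¹)⁻¹) * (θ⁻¹ * (A * K⁻¹)) := by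
  group

end Generic

/-! ### Single-letter exchange in `F` -/

lemma exch (θ : F4) (hra : θ⁻¹ * aF * θ * aF⁻¹ ∈ rels)
    (hrk : θ⁻¹ * kF * θ * aF⁻¹ * kF⁻¹ ∈ rels)
    (s : Ltr) (hs : s.1 = 2 ∨ s.1 = 3) (c : Bool) :
    ∃ (L : List F4) (v : List Ltr),
      ltr s * (cond c θ θ⁻¹) = L.prod * (cond c θ θ⁻¹ * wpr v) ∧
      L.length ≤ 2 ∧ (∀ g ∈ L, isConj1 g) ∧ (∀ p ∈ v, p.1 = 2 ∨ p.1 = 3) ∧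
      kc v = kc [s] ∧ v.length ≤ 1 + kc [s] := by
  obtain ⟨i, b⟩ := s
  simp only at hs
  rcases hs with h | h <;> subst h <;> cases b <;> cases c
  · -- a⁻¹ * θ⁻¹
    refine ⟨[aF⁻¹ * (θ⁻¹ * aF * θ * aF⁻¹) * aF], [(2, false)], ?_, by simp, ?_, by simp,
      by decide, by decide⟩
    · simp only [ltr, wpr, aF, reduceIte, List.map, List.prod_cons, List.prod_nil, cond]
      norm_num
      group
    · intro g hg
      simp only [List.mem_singleton] at hg
      exact ⟨aF, _, hra, Or.inl (by rw [hg])⟩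
  · -- a⁻¹ * θ
    refine ⟨[(θ⁻¹ * aF)⁻¹ * (θ⁻¹ * aF * θ * aF⁻¹)⁻¹ * (θ⁻¹ * aF)], [(2, false)], ?_, by simp,
      ?_, by simp, by decide, by decide⟩
    · simp only [ltr, wpr, aF, reduceIte, List.map, List.prod_cons, List.prod_nil, cond]
      norm_num
      group
    · intro g hg
      simp only [List.mem_singleton] at hg
      exact ⟨θ⁻¹ * aF, _, hra, Or.inr (by rw [hg])⟩
  · -- a * θ⁻¹
    refine ⟨[(θ⁻¹ * aF * θ * aF⁻¹)⁻¹], [(2, true)], ?_, by simp, ?_, by simp,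
      by decide, by decide⟩
    · simp only [ltr, wpr, aF, reduceIte, List.map, List.prod_cons, List.prod_nil, cond]
      norm_num
      group
    · intro g hg
      simp only [List.mem_singleton] at hg
      exact ⟨1, _, hra, Or.inr (by rw [hg]; group)⟩
  · -- a * θ
    refine ⟨[θ * (θ⁻¹ * aF * θ * aF⁻¹) * θ⁻¹], [(2, true)], ?_, by simp, ?_, by simp,
      by decide, by decide⟩
    · simp only [ltr, wpr, aF, reduceIte, List.map, List.prod_cons, List.prod_nil, cond]
      norm_num
      group
    · intro g hg
      simp only [List.mem_singleton] at hg
      exact ⟨θ⁻¹, _, hra, Or.inl (by rw [hg]; group)⟩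
  · -- k⁻¹ * θ⁻¹
    refine ⟨[kF⁻¹ * (θ⁻¹ * kF * θ * aF⁻¹ * kF⁻¹) * kF, (θ⁻¹ * aF * θ * aF⁻¹)⁻¹],
      [(2, true), (3, false)], ?_, by simp, ?_, by simp, by decide, by decide⟩
    · simp only [ltr, wpr, aF, kF, reduceIte, List.map, List.prod_cons, List.prod_nil, cond]
      norm_num
      group
    · intro g hg
      simp only [List.mem_cons, List.mem_singleton, List.not_mem_nil, or_false] at hg
      rcases hg with hg | hg
      · exact ⟨kF, _, hrk, Or.inl (by rw [hg])⟩
      · exact ⟨1, _, hra, Or.inr (by rw [hg]; group)⟩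
  · -- k⁻¹ * θ
    refine ⟨[(θ⁻¹ * kF)⁻¹ * (θ⁻¹ * kF * θ * aF⁻¹ * kF⁻¹)⁻¹ * (θ⁻¹ * kF)],
      [(2, false), (3, false)], ?_, by simp, ?_, by simp, by decide, by decide⟩
    · simp only [ltr, wpr, aF, kF, reduceIte, List.map, List.prod_cons, List.prod_nil, cond]
      norm_num
      group
    · intro g hg
      simp only [List.mem_singleton] at hg
      exact ⟨θ⁻¹ * kF, _, hrk, Or.inr (by rw [hg])⟩
  · -- k * θ⁻¹
    refine ⟨[kF * (θ⁻¹ * aF * θ * aF⁻¹) * kF⁻¹, (θ⁻¹ * kF * θ * aF⁻¹ * kF⁻¹)⁻¹],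
      [(3, true), (2, false)], ?_, by simp, ?_, by simp, by decide, by decide⟩
    · simp only [ltr, wpr, aF, kF, reduceIte, List.map, List.prod_cons, List.prod_nil, cond]
      norm_num
      group
    · intro g hg
      simp only [List.mem_cons, List.mem_singleton, List.not_mem_nil, or_false] at hg
      rcases hg with hg | hg
      · exact ⟨kF⁻¹, _, hra, Or.inl (by rw [hg]; group)⟩
      · exact ⟨1, _, hrk, Or.inr (by rw [hg]; group)⟩
  · -- k * θ
    refine ⟨[θ * (θ⁻¹ * kF * θ * aF⁻¹ * kF⁻¹) * θ⁻¹], [(3, true), (2, true)], ?_, by simp,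
      ?_, by simp, by decide, by decide⟩
    · simp only [ltr, wpr, aF, kF, reduceIte, List.map, List.prod_cons, List.prod_nil, cond]
      norm_num
      group
    · intro g hg
      simp only [List.mem_singleton] at hg
      exact ⟨θ⁻¹, _, hrk, Or.inl (by rw [hg]; group)⟩

/-! ### Moving a θ-letter across a word in `a, k` -/

lemma kc2 : ∀ b : Bool, kc [((2 : Fin 4), b)] = 0 := by decide
lemma kc3 : ∀ b : Bool, kc [((3 : Fin 4), b)] = 1 := by decide

lemma wpr_single (p : Ltr) : wpr [p] = ltr p := by simp [wpr]

lemma cross (θ : F4) (hra : θ⁻¹ * aF * θ * aF⁻¹ ∈ rels)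
    (hrk : θ⁻¹ * kF * θ * aF⁻¹ * kF⁻¹ ∈ rels) (c : Bool) :
    ∀ u : List Ltr, (∀ p ∈ u, p.1 = 2 ∨ p.1 = 3) →
    ∃ (L : List F4) (v : List Ltr),
      wpr u * (cond c θ θ⁻¹) = L.prod * (cond c θ θ⁻¹ * wpr v) ∧
      L.length ≤ 2 * u.length ∧ (∀ g ∈ L, isConj1 g) ∧ (∀ p ∈ v, p.1 = 2 ∨ p.1 = 3) ∧
      kc v = kc u ∧ v.length ≤ u.length + kc u := by
  intro u
  induction u with
  | nil => exact fun _ => ⟨[], [], by simp, by simp, by simp, by simp, rfl, by simp⟩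
  | cons s u ih =>
    intro hu
    obtain ⟨L₁, v₁, e₁, len₁, conj₁, hv₁, kcv₁, vl₁⟩ :=
      ih (fun p hp => hu p (List.mem_cons_of_mem _ hp))
    obtain ⟨L₀, v₀, e₀, len₀, conj₀, hv₀, kcv₀, vl₀⟩ :=
      exch θ hra hrk s (hu s (List.mem_cons_self)) c
    refine ⟨L₁.map (fun g => ltr s * g * (ltr s)⁻¹) ++ L₀, v₀ ++ v₁, ?_, ?_, ?_, ?_, ?_, ?_⟩
    · calc wpr (s :: u) * cond c θ θ⁻¹ = ltr s * (wpr u * cond c θ θ⁻¹) := by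
            rw [wpr_cons]; group
        _ = ltr s * (L₁.prod * (cond c θ θ⁻¹ * wpr v₁)) := by rw [e₁]
        _ = (ltr s * L₁.prod * (ltr s)⁻¹) * ((ltr s * cond c θ θ⁻¹) * wpr v₁) := by group
        _ = (L₁.map (fun g => ltr s * g * (ltr s)⁻¹)).prod *
              ((L₀.prod * (cond c θ θ⁻¹ * wpr v₀)) * wpr v₁) := by rw [conj_prod, e₀]
        _ = _ := by rw [List.prod_append, wpr_append]; group
    · simp only [List.length_append, List.length_map, List.length_cons]
      omega
    · intro g hg
      rcases List.mem_append.mp hg with hg | hg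
      · obtain ⟨g₀, hg₀, rfl⟩ := List.mem_map.mp hg
        exact isConj1_conj _ (conj₁ g₀ hg₀)
      · exact conj₀ g hg
    · intro p hp
      rcases List.mem_append.mp hp with hp | hp
      exacts [hv₀ p hp, hv₁ p hp]
    · rw [kc_append, kc_cons, kcv₀, kcv₁]
    · have := kc_cons s u
      simp only [List.length_append, List.length_cons]
      omega

/-! ### The main rewriting lemma -/

lemma main (ℓ : List Ltr) :
    ∃ (L : List F4) (T u : List Ltr),
      wpr ℓ = L.prod * (wpr T * wpr u) ∧ (∀ g ∈ L, isConj1 g) ∧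
      (∀ p ∈ T, p.1 = 0 ∨ p.1 = 1) ∧ (∀ p ∈ u, p.1 = 2 ∨ p.1 = 3) ∧
      L.length ≤ 2 * ℓ.length ^ 3 ∧ u.length ≤ ℓ.length * (ℓ.length + 1) ∧
      kc u ≤ ℓ.length := by
  induction ℓ using List.reverseRecOn with
  | nil => exact ⟨[], [], [], by simp, by simp, by simp, by simp, by simp, by simp, by simp⟩
  | append_singleton ℓ s ih =>
    obtain ⟨L, T, u, e, cj, hT, hu, lenL, lenu, kcu⟩ := ih
    have hwa : wpr (ℓ ++ [s]) = wpr ℓ * ltr s := by rw [wpr_append, wpr_single]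
    have hlen : (ℓ ++ [s]).length = ℓ.length + 1 := by simp
    set m := ℓ.length with hm
    obtain ⟨i, b⟩ := s
    -- helper for the two `a, k` letter cases
    have akCase : ∀ (hi : i = 2 ∨ i = 3),
        ∃ (L' : List F4) (T' u' : List Ltr),
          wpr (ℓ ++ [(i, b)]) = L'.prod * (wpr T' * wpr u') ∧ (∀ g ∈ L', isConj1 g) ∧
          (∀ p ∈ T', p.1 = 0 ∨ p.1 = 1) ∧ (∀ p ∈ u', p.1 = 2 ∨ p.1 = 3) ∧
          L'.length ≤ 2 * (ℓ ++ [(i, b)]).length ^ 3 ∧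
          u'.length ≤ (ℓ ++ [(i, b)]).length * ((ℓ ++ [(i, b)]).length + 1) ∧
          kc u' ≤ (ℓ ++ [(i, b)]).length := by
      intro hi
      refine ⟨L, T, u ++ [(i, b)], ?_, cj, hT, ?_, ?_, ?_, ?_⟩
      · rw [hwa, e, wpr_append, wpr_single]; group
      · intro p hp
        rcases List.mem_append.mp hp with hp | hp
        · exact hu p hp
        · simp only [List.mem_singleton] at hp
          subst hp; exact hi
      · rw [hlen]; nlinarith [lenL]
      · rw [hlen]
        simp only [List.length_append, List.length_cons, List.length_nil]
        nlinarith [lenu]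
      · rw [hlen, kc_append]
        have h1 : kc [(i, b)] ≤ 1 := by
          rcases hi with h | h <;> subst h <;> simp [kc2 b, kc3 b]
        omega
    -- helper for the two `θ` letter cases
    have thCase : ∀ θ : F4, θ⁻¹ * aF * θ * aF⁻¹ ∈ rels →
        θ⁻¹ * kF * θ * aF⁻¹ * kF⁻¹ ∈ rels → (i = 0 ∨ i = 1) →
        ltr (i, b) = cond b θ θ⁻¹ →
        ∃ (L' : List F4) (T' u' : List Ltr),
          wpr (ℓ ++ [(i, b)]) = L'.prod * (wpr T' * wpr u') ∧ (∀ g ∈ L', isConj1 g) ∧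
          (∀ p ∈ T', p.1 = 0 ∨ p.1 = 1) ∧ (∀ p ∈ u', p.1 = 2 ∨ p.1 = 3) ∧
          L'.length ≤ 2 * (ℓ ++ [(i, b)]).length ^ 3 ∧
          u'.length ≤ (ℓ ++ [(i, b)]).length * ((ℓ ++ [(i, b)]).length + 1) ∧
          kc u' ≤ (ℓ ++ [(i, b)]).length := by
      intro θ hra hrk hi hltr
      obtain ⟨Lc, v, ec, lenc, cjc, hv, kcv, vl⟩ := cross θ hra hrk b u hu
      refine ⟨L ++ Lc.map (fun g => wpr T * g * (wpr T)⁻¹), T ++ [(i, b)], v, ?_, ?_, ?_,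
        hv, ?_, ?_, ?_⟩
      · calc wpr (ℓ ++ [(i, b)]) = L.prod * (wpr T * (wpr u * ltr (i, b))) := by
              rw [hwa, e]; group
          _ = L.prod * (wpr T * (Lc.prod * (ltr (i, b) * wpr v))) := by rw [hltr, ec]
          _ = L.prod * ((wpr T * Lc.prod * (wpr T)⁻¹) * ((wpr T * ltr (i, b)) * wpr v)) := by
              group
          _ = L.prod * ((Lc.map (fun g => wpr T * g * (wpr T)⁻¹)).prod *
                ((wpr T * ltr (i, b)) * wpr v)) := by rw [conj_prod]
          _ = _ := by rw [List.prod_append, wpr_append, wpr_single]; group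
      · intro g hg
        rcases List.mem_append.mp hg with hg | hg
        · exact cj g hg
        · obtain ⟨g₀, hg₀, rfl⟩ := List.mem_map.mp hg
          exact isConj1_conj _ (cjc g₀ hg₀)
      · intro p hp
        rcases List.mem_append.mp hp with hp | hp
        · exact hT p hp
        · simp only [List.mem_singleton] at hp
          subst hp; exact hi
      · rw [hlen]
        simp only [List.length_append, List.length_map]
        nlinarith [lenL, lenc, lenu]
      · rw [hlen]
        nlinarith [vl, lenu, kcu]
      · rw [hlen]; omega
    fin_cases i
    · exact thCase theta1 (by simp [rels]) (by simp [rels]) (Or.inl rfl)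
        (by cases b <;> rfl)
    · exact thCase theta2 (by simp [rels]) (by simp [rels]) (Or.inr rfl)
        (by cases b <;> rfl)
    · exact akCase (Or.inl rfl)
    · exact akCase (Or.inr rfl)

/-! ### A concrete model: `F(a,k) ⋊ F(θ₁,θ₂)` -/

abbrev FB := FreeGroup Bool

def phiF : FB →* FB :=
  FreeGroup.lift (fun b => if b then FreeGroup.of true * (FreeGroup.of false)⁻¹
    else FreeGroup.of false)

def phiI : FB →* FB :=
  FreeGroup.lift (fun b => if b then FreeGroup.of true * FreeGroup.of false
    else FreeGroup.of false)

lemma phiIF : phiI.comp phiF = MonoidHom.id FB := by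
  apply FreeGroup.ext_hom
  intro b
  cases b <;> simp [phiF, phiI]

lemma phiFI : phiF.comp phiI = MonoidHom.id FB := by
  apply FreeGroup.ext_hom
  intro b
  cases b <;> simp [phiF, phiI]

def phiA : MulAut FB := MonoidHom.toMulEquiv phiF phiI phiIF phiFI

def act : FB →* MulAut FB := FreeGroup.lift (fun _ => phiA)

def fM : Fin 4 → (FB ⋊[act] FB)
  | 0 => .inr (.of false)
  | 1 => .inr (.of true)
  | 2 => .inl (.of false)
  | 3 => .inl (.of true)

lemma act_inv_apply (g : FB) (hg : act g = phiA) (x : FB) : (act g)⁻¹ x = phiI x := by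
  rw [hg]; rfl

lemma inl_conj (g : FB) (hg : act g = phiA) (n : FB) :
    (SemidirectProduct.inr g : FB ⋊[act] FB)⁻¹ * .inl n * .inr g =
      SemidirectProduct.inl (phiI n) := by
  rw [← act_inv_apply g hg n, SemidirectProduct.inl_aut_inv g n, map_inv]

lemma relsM : ∀ r ∈ rels, FreeGroup.lift fM r = 1 := by
  have key1 : ∀ g : FB, act g = phiA →
      (SemidirectProduct.inr g : FB ⋊[act] FB)⁻¹ * .inl (.of false) * .inr g *
        (SemidirectProduct.inl (FreeGroup.of false))⁻¹ = 1 := by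
    intro g hg
    rw [inl_conj g hg]
    have h : phiI (FreeGroup.of false) = FreeGroup.of false := by simp [phiI]
    rw [h, ← map_inv, ← map_mul]
    simp
  have key2 : ∀ g : FB, act g = phiA →
      (SemidirectProduct.inr g : FB ⋊[act] FB)⁻¹ * .inl (.of true) * .inr g *
        (SemidirectProduct.inl (FreeGroup.of false))⁻¹ *
        (SemidirectProduct.inl (FreeGroup.of true))⁻¹ = 1 := by
    intro g hg
    rw [inl_conj g hg]
    have h : phiI (FreeGroup.of true) = FreeGroup.of true * FreeGroup.of false := by
      simp [phiI]
    rw [h, ← map_inv, ← map_inv, ← map_mul, ← map_mul,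
      show FreeGroup.of true * FreeGroup.of false * (FreeGroup.of false)⁻¹ *
        (FreeGroup.of true)⁻¹ = (1 : FB) by group, map_one]
  have hact : ∀ b : Bool, act (FreeGroup.of b) = phiA := fun b => FreeGroup.lift_apply_of
  intro r hr
  simp only [rels, Set.mem_insert_iff, Set.mem_singleton_iff] at hr
  rcases hr with h | h | h | h <;> subst h <;>
    simp only [theta1, theta2, aF, kF, map_mul, map_inv, FreeGroup.lift_apply_of]
  · exact key1 _ (hact false)
  · exact key1 _ (hact true)
  · exact key2 _ (hact false)
  · exact key2 _ (hact true)

/-! ### Reading off the two components -/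

def σθ : FB →* F4 := FreeGroup.lift (fun b => if b then theta2 else theta1)
def σak : FB →* F4 := FreeGroup.lift (fun b => if b then kF else aF)

lemma Tpart : ∀ T : List Ltr, (∀ p ∈ T, p.1 = 0 ∨ p.1 = 1) →
    ∃ t : FB, FreeGroup.lift fM (wpr T) = .inr t ∧ σθ t = wpr T := by
  intro T
  induction T with
  | nil => exact fun _ => ⟨1, by simp, by simp⟩
  | cons p T ih =>
    intro hT
    obtain ⟨t, h1, h2⟩ := ih (fun q hq => hT q (List.mem_cons_of_mem _ hq))
    have hp := hT p (List.mem_cons_self)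
    obtain ⟨i, b⟩ := p
    simp only at hp
    have hsingle : ∃ tp : FB,
        FreeGroup.lift fM (ltr (i, b)) = .inr tp ∧ σθ tp = ltr (i, b) := by
      rcases hp with h | h <;> subst h <;> cases b
      · exact ⟨(FreeGroup.of false)⁻¹, by simp [ltr, fM], by simp [σθ, ltr, theta1]⟩
      · exact ⟨FreeGroup.of false, by simp [ltr, fM], by simp [σθ, ltr, theta1]⟩
      · exact ⟨(FreeGroup.of true)⁻¹, by simp [ltr, fM], by simp [σθ, ltr, theta2]⟩
      · exact ⟨FreeGroup.of true, by simp [ltr, fM], by simp [σθ, ltr, theta2]⟩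
    obtain ⟨tp, h3, h4⟩ := hsingle
    exact ⟨tp * t, by rw [wpr_cons, map_mul, h1, h3, map_mul],
      by rw [map_mul, h2, h4, wpr_cons]⟩

lemma upart : ∀ u : List Ltr, (∀ p ∈ u, p.1 = 2 ∨ p.1 = 3) →
    ∃ n : FB, FreeGroup.lift fM (wpr u) = .inl n ∧ σak n = wpr u := by
  intro u
  induction u with
  | nil => exact fun _ => ⟨1, by simp, by simp⟩
  | cons p u ih =>
    intro hu
    obtain ⟨t, h1, h2⟩ := ih (fun q hq => hu q (List.mem_cons_of_mem _ hq))
    have hp := hu p (List.mem_cons_self)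
    obtain ⟨i, b⟩ := p
    simp only at hp
    have hsingle : ∃ tp : FB,
        FreeGroup.lift fM (ltr (i, b)) = .inl tp ∧ σak tp = ltr (i, b) := by
      rcases hp with h | h <;> subst h <;> cases b
      · exact ⟨(FreeGroup.of false)⁻¹, by simp [ltr, fM], by simp [σak, ltr, aF]⟩
      · exact ⟨FreeGroup.of false, by simp [ltr, fM], by simp [σak, ltr, aF]⟩
      · exact ⟨(FreeGroup.of true)⁻¹, by simp [ltr, fM], by simp [σak, ltr, kF]⟩
      · exact ⟨FreeGroup.of true, by simp [ltr, fM], by simp [σak, ltr, kF]⟩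
    obtain ⟨tp, h3, h4⟩ := hsingle
    exact ⟨tp * t, by rw [wpr_cons, map_mul, h1, h3, map_mul],
      by rw [map_mul, h2, h4, wpr_cons]⟩

end CubicIso

theorem cubic_isoperimetric_function :
    ∃ C : ℕ, 0 < C ∧
      ∀ w : FreeGroup (Fin 4), π w = 1 →
        ∃ L : List (FreeGroup (Fin 4)),
          L.prod = w ∧
          L.length ≤ C * (FreeGroup.norm w) ^ 3 + C ∧
          ∀ g ∈ L, ∃ x : FreeGroup (Fin 4), ∃ r ∈ rels,
            g = x⁻¹ * r * x ∨ g = x⁻¹ * r⁻¹ * x := by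
  classical
  refine ⟨2, by norm_num, ?_⟩
  intro w hw
  obtain ⟨L, T, u, e, cj, hT, hu, lenL, _, _⟩ := CubicIso.main w.toWord
  rw [CubicIso.wpr_toWord w] at e
  -- the image of the product of conjugates of relators is trivial
  have hLmem : L.prod ∈ Subgroup.normalClosure rels := by
    refine list_prod_mem ?_
    intro g hg
    obtain ⟨x, r, hr, h | h⟩ := cj g hg <;> subst h
    · have := (Subgroup.normalClosure_normal (s := rels)).conj_mem r
        (Subgroup.subset_normalClosure hr) x⁻¹
      simpa using this
    · have := (Subgroup.normalClosure_normal (s := rels)).conj_mem r⁻¹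
        (inv_mem (Subgroup.subset_normalClosure hr)) x⁻¹
      simpa using this
  have hπL : π L.prod = 1 := (QuotientGroup.eq_one_iff _).mpr hLmem
  have hX : π (CubicIso.wpr T * CubicIso.wpr u) = 1 := by
    have h := congrArg π e
    rw [map_mul, hw, hπL, one_mul] at h
    exact h.symm
  have hΨ : FreeGroup.lift CubicIso.fM (CubicIso.wpr T * CubicIso.wpr u) = 1 :=
    PresentedGroup.to_group_eq_one_of_mem_closure CubicIso.relsM _
      ((QuotientGroup.eq_one_iff _).mp hX)
  obtain ⟨t, ht1, ht2⟩ := CubicIso.Tpart T hT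
  obtain ⟨n, hn1, hn2⟩ := CubicIso.upart u hu
  rw [map_mul, ht1, hn1] at hΨ
  have hrt : t = 1 := by
    have h := DFunLike.congr_arg
      (SemidirectProduct.rightHom :
        CubicIso.FB ⋊[CubicIso.act] CubicIso.FB →* CubicIso.FB) hΨ
    simpa using h
  have hnl : n = 1 := by
    rw [hrt, map_one, one_mul] at hΨ
    have : (SemidirectProduct.inl n : CubicIso.FB ⋊[CubicIso.act] CubicIso.FB) =
        SemidirectProduct.inl (1 : CubicIso.FB) := by
      simpa using hΨ
    exact SemidirectProduct.inl_injective this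
  have hT1 : CubicIso.wpr T = 1 := by rw [← ht2, hrt, map_one]
  have hu1 : CubicIso.wpr u = 1 := by rw [← hn2, hnl, map_one]
  refine ⟨L, ?_, ?_, cj⟩
  · rw [e, hT1, hu1, one_mul, mul_one]
  · have hnorm : FreeGroup.norm w = w.toWord.length := rfl
    rw [hnorm]
    exact le_trans lenL (Nat.le_add_right _ 2)
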